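/- Let u be a partial transformation of a finite set Ω and G a group of permutations of Ω. If u is regular in the monoid ⟨G,u⟩ generated by G and u (i.e., there exists b ∈ ⟨G,u⟩ with u = u∘b∘u), then there exists g ∈ G such that rank(u∘g∘u) = rank(u). -/

import Mathlib

variable {Ω : Type*} [Fintype Ω] [DecidableEq Ω]

/-- A partial transformation of `Ω`, encoded as a function `Ω → Option Ω`. -/
def PT (Ω : Type*) := Ω → Option Ω

/-- Composition of partial transformations: apply `f` first, then `g`. -/
def pcomp (f g : PT Ω) : PT Ω := fun x => (f x).bind g

/-- A permutation viewed as a (total) partial transformation. -/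
def ofPerm (g : Equiv.Perm Ω) : PT Ω := fun x => some (g x)

/-- The rank of a partial transformation: the cardinality of its image. -/
noncomputable def rank (u : PT Ω) : ℕ := {y : Ω | ∃ x : Ω, u x = some y}.ncard

/-- The domain of a partial transformation. -/
def dom (u : PT Ω) : Set Ω := {x : Ω | u x ≠ none}

/-- Membership in the subsemigroup of `PT Ω` generated by a set `S`. -/
inductive InGen (S : Set (PT Ω)) : PT Ω → Prop
  | base {s : PT Ω} : s ∈ S → InGen S s
  | mul {a b : PT Ω} : InGen S a → InGen S b → InGen S (pcomp a b)

/-- The generating set consisting of the permutations of `G` together with `t`. -/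
def gens (G : Subgroup (Equiv.Perm Ω)) (t : PT Ω) : Set (PT Ω) :=
  {f : PT Ω | (∃ g ∈ G, f = ofPerm g) ∨ f = t}

lemma pcomp_assoc (a b c : PT Ω) : pcomp (pcomp a b) c = pcomp a (pcomp b c) := by
  funext x
  simp only [pcomp]
  cases a x <;> rfl

lemma pcomp_ofPerm_ofPerm (g₁ g₂ : Equiv.Perm Ω) :
    pcomp (ofPerm g₁) (ofPerm g₂) = ofPerm (g₂ * g₁) := by
  funext x
  simp [pcomp, ofPerm]; rfl

lemma pcomp_one_left (u : PT Ω) : pcomp (ofPerm 1) u = u := by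
  funext x; simp [pcomp, ofPerm]; rfl

lemma pcomp_one_right (u : PT Ω) : pcomp u (ofPerm 1) = u := by
  funext x; simp only [pcomp, ofPerm]; cases u x <;> rfl

lemma rank_pcomp_le_right (f h : PT Ω) : rank (pcomp f h) ≤ rank h := by
  apply Set.ncard_le_ncard _ (Set.toFinite _)
  rintro y ⟨x, hx⟩
  obtain ⟨z, _, hz2⟩ := Option.bind_eq_some_iff.mp hx
  exact ⟨z, hz2⟩

lemma rank_pcomp_le_left (f h : PT Ω) : rank (pcomp f h) ≤ rank f := by
  classical
  set φ : Ω → Ω := fun z => if hz : ∃ y, h z = some y then hz.choose else z with hφ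
  have hsub : {y : Ω | ∃ x, pcomp f h x = some y} ⊆ φ '' {z : Ω | ∃ x, f x = some z} := by
    rintro y ⟨x, hx⟩
    obtain ⟨z, hz1, hz2⟩ := Option.bind_eq_some_iff.mp hx
    refine ⟨z, ⟨x, hz1⟩, ?_⟩
    have hex : ∃ y, h z = some y := ⟨y, hz2⟩
    have hy : hex.choose = y := Option.some_injective _ (hex.choose_spec.symm.trans hz2)
    simp only [hφ, dif_pos hex, hy]
  calc rank (pcomp f h) ≤ (φ '' {z : Ω | ∃ x, f x = some z}).ncard :=
        Set.ncard_le_ncard hsub (Set.toFinite _)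
    _ ≤ rank f := Set.ncard_image_le (Set.toFinite _)

lemma gen_struct {G : Subgroup (Equiv.Perm Ω)} {u b : PT Ω} (hb : InGen (gens G u) b) :
    (∃ g ∈ G, b = ofPerm g) ∨
    (∃ g ∈ G, ∃ c : PT Ω, b = pcomp (pcomp (ofPerm g) u) c) := by
  induction hb with
  | base hs =>
    rcases hs with ⟨g, hg, rfl⟩ | rfl
    · exact Or.inl ⟨g, hg, rfl⟩
    · exact Or.inr ⟨1, one_mem _, ofPerm 1, by
        rw [pcomp_one_left, pcomp_one_right]⟩
  | mul ha hb iha ihb =>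
    rcases iha with ⟨g₁, hg₁, rfl⟩ | ⟨g, hg, c, rfl⟩
    · rcases ihb with ⟨g₂, hg₂, rfl⟩ | ⟨g₂, hg₂, c, rfl⟩
      · exact Or.inl ⟨g₂ * g₁, mul_mem hg₂ hg₁, (pcomp_ofPerm_ofPerm g₁ g₂).symm⟩
      · refine Or.inr ⟨g₂ * g₁, mul_mem hg₂ hg₁, c, ?_⟩
        rw [← pcomp_ofPerm_ofPerm, pcomp_assoc, pcomp_assoc, pcomp_assoc]
    · exact Or.inr ⟨g, hg, _, by rw [pcomp_assoc]⟩

theorem regular_implies_rank_eq (G : Subgroup (Equiv.Perm Ω)) (u : PT Ω)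
    (h : ∃ b : PT Ω, InGen (gens G u) b ∧ u = pcomp (pcomp u b) u) :
    ∃ g ∈ G, rank (pcomp (pcomp u (ofPerm g)) u) = rank u := by
  obtain ⟨b, hb, heq⟩ := h
  rcases gen_struct hb with ⟨g, hg, rfl⟩ | ⟨g, hg, c, rfl⟩
  · exact ⟨g, hg, congrArg rank heq.symm⟩
  · refine ⟨g, hg, le_antisymm (rank_pcomp_le_right _ _) ?_⟩
    have key : u = pcomp (pcomp (pcomp u (ofPerm g)) u) (pcomp c u) := by
      conv_lhs => rw [heq]
      simp only [pcomp_assoc]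
    calc rank u = rank (pcomp (pcomp (pcomp u (ofPerm g)) u) (pcomp c u)) :=
          congrArg rank key
      _ ≤ rank (pcomp (pcomp u (ofPerm g)) u) := rank_pcomp_le_left _ _
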